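/- For every positive integer n, the only 231-avoiding involution of length n that has a unique longest increasing subsequence is the identity permutation; consequently i_n(231) = 1 for all n ≥ 1. -/

import Mathlib

/-- `s` is the index set of an increasing subsequence of the word `f`. -/
def IsIncSubseq {n : ℕ} {α : Type*} [Preorder α] (f : Fin n → α) (s : Finset (Fin n)) : Prop :=
  ∀ i ∈ s, ∀ j ∈ s, i < j → f i < f j

/-- `f` has a unique longest increasing subsequence. -/
def HasULIS {n : ℕ} {α : Type*} [Preorder α] (f : Fin n → α) : Prop :=
  ∃! s : Finset (Fin n), IsIncSubseq f s ∧
    ∀ t : Finset (Fin n), IsIncSubseq f t → t.card ≤ s.card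

/-- `p` contains the pattern `q`. -/
def Contains {k n : ℕ} (q : Equiv.Perm (Fin k)) (p : Equiv.Perm (Fin n)) : Prop :=
  ∃ f : Fin k → Fin n, StrictMono f ∧ ∀ a b : Fin k, p (f a) < p (f b) ↔ q a < q b

/-- `p` avoids the pattern `q`. -/
def Avoids {k n : ℕ} (q : Equiv.Perm (Fin k)) (p : Equiv.Perm (Fin n)) : Prop :=
  ¬ Contains q p

def pattern321 : Equiv.Perm (Fin 3) := ⟨![2,1,0], ![2,1,0], by decide, by decide⟩
def pattern231 : Equiv.Perm (Fin 3) := ⟨![1,2,0], ![2,0,1], by decide, by decide⟩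
def pattern132 : Equiv.Perm (Fin 3) := ⟨![0,2,1], ![0,2,1], by decide, by decide⟩
def pattern123 : Equiv.Perm (Fin 3) := Equiv.refl (Fin 3)

/-- the number of `q`-avoiding permutations of length `n` with a unique
longest increasing subsequence. -/
noncomputable def uNum {k : ℕ} (q : Equiv.Perm (Fin k)) (n : ℕ) : ℕ :=
  Nat.card {p : Equiv.Perm (Fin n) // Avoids q p ∧ HasULIS ⇑p}

/-- the number of `q`-avoiding involutions of length `n` with a unique
longest increasing subsequence. -/
noncomputable def iNum {k : ℕ} (q : Equiv.Perm (Fin k)) (n : ℕ) : ℕ :=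
  Nat.card {p : Equiv.Perm (Fin n) // p⁻¹ = p ∧ Avoids q p ∧ HasULIS ⇑p}

/-- A permutation is indecomposable if it cannot be cut into a (nonempty) prefix and
a (nonempty) suffix so that every entry of the prefix is smaller than every entry
of the suffix. -/
def Indecomposable {m : ℕ} (w : Equiv.Perm (Fin m)) : Prop :=
  ¬ ∃ j : ℕ, 1 ≤ j ∧ j < m ∧ ∀ a b : Fin m, (a : ℕ) < j → j ≤ (b : ℕ) → w a < w b

lemma no231 {n : ℕ} {p : Equiv.Perm (Fin n)} (h : Avoids pattern231 p) {i j k : Fin n}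
    (hij : i < j) (hjk : j < k) (h1 : p k < p i) (h2 : p i < p j) : False := by
  apply h
  refine ⟨![i,j,k], ?_, ?_⟩
  · intro a b hab
    match a, b with
    | 0, 0 => exact absurd hab (by decide)
    | 0, 1 => exact hij
    | 0, 2 => exact hij.trans hjk
    | 1, 0 => exact absurd hab (by decide)
    | 1, 1 => exact absurd hab (by decide)
    | 1, 2 => exact hjk
    | 2, 0 => exact absurd hab (by decide)
    | 2, 1 => exact absurd hab (by decide)
    | 2, 2 => exact absurd hab (by decide)
  · intro a b
    match a, b with
    | 0, 0 => exact iff_of_false (lt_irrefl _) (by decide)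
    | 0, 1 => exact iff_of_true h2 (by decide)
    | 0, 2 => exact iff_of_false (asymm h1) (by decide)
    | 1, 0 => exact iff_of_false (asymm h2) (by decide)
    | 1, 1 => exact iff_of_false (lt_irrefl _) (by decide)
    | 1, 2 => exact iff_of_false (asymm (h1.trans h2)) (by decide)
    | 2, 0 => exact iff_of_true h1 (by decide)
    | 2, 1 => exact iff_of_true (h1.trans h2) (by decide)
    | 2, 2 => exact iff_of_false (lt_irrefl _) (by decide)

lemma no312 {n : ℕ} {p : Equiv.Perm (Fin n)} (hinv : p⁻¹ = p) (h : Avoids pattern231 p)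
    {i j k : Fin n} (hij : i < j) (hjk : j < k) (h1 : p j < p k) (h2 : p k < p i) : False := by
  have key : ∀ x : Fin n, p (p x) = x := by
    intro x
    nth_rewrite 1 [← hinv]
    exact Equiv.symm_apply_apply p x
  exact no231 h (i := p j) (j := p k) (k := p i) h1 h2
    (by rw [key, key]; exact hij) (by rw [key, key]; exact hjk)

lemma key_lemma {n : ℕ} (p : Equiv.Perm (Fin n)) (hinv : p⁻¹ = p)
    (hav : Avoids pattern231 p) (hu : HasULIS ⇑p) : p = 1 := by
  classical
  by_cases hmono : ∀ i j : Fin n, i < j → p i < p j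
  · have hsm : StrictMono ⇑p := fun i j h => hmono i j h
    ext x
    exact Fin.coe_orderIso_apply (StrictMono.orderIsoOfSurjective ⇑p hsm p.surjective) x
  · exfalso
    push_neg at hmono
    obtain ⟨i0, j0, hij0, hnlt⟩ := hmono
    have hinv0 : p j0 < p i0 :=
      lt_of_le_of_ne hnlt (fun h => (ne_of_lt hij0) (p.injective h).symm)
    set T := Finset.univ.filter (fun i : Fin n => ∃ j, i < j ∧ p j < p i) with hT
    have hTne : T.Nonempty :=
      ⟨i0, Finset.mem_filter.mpr ⟨Finset.mem_univ _, ⟨j0, hij0, hinv0⟩⟩⟩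
    obtain ⟨a, haT, hamin⟩ := T.exists_min_image id hTne
    obtain ⟨j1, haj1, hj1⟩ : ∃ j, a < j ∧ p j < p a := (Finset.mem_filter.mp haT).2
    set B := Finset.univ.filter (fun j : Fin n => p j < p a) with hB
    have hBne : B.Nonempty := ⟨j1, Finset.mem_filter.mpr ⟨Finset.mem_univ _, hj1⟩⟩
    obtain ⟨b, hbB, hbmax⟩ := B.exists_max_image id hBne
    have hpb : p b < p a := (Finset.mem_filter.mp hbB).2
    have hab : a < b :=
      lt_of_lt_of_le haj1 (hbmax j1 (Finset.mem_filter.mpr ⟨Finset.mem_univ _, hj1⟩))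
    -- (0) before a, everything is below everything later
    have h0 : ∀ c d : Fin n, c < a → c < d → p c < p d := by
      intro c d hc hcd
      by_contra hle
      have hdc : p d < p c :=
        lt_of_le_of_ne (not_lt.mp hle) (fun h => (ne_of_lt hcd) (p.injective h).symm)
      have hcT : c ∈ T := Finset.mem_filter.mpr ⟨Finset.mem_univ _, ⟨d, hcd, hdc⟩⟩
      exact absurd hc (not_lt.mpr (hamin c hcT))
    -- (1) after b, everything is above p a
    have h1 : ∀ c : Fin n, b < c → p a < p c := by
      intro c hc
      rcases lt_trichotomy (p c) (p a) with h | h | h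
      · have : c ∈ B := Finset.mem_filter.mpr ⟨Finset.mem_univ _, h⟩
        exact absurd (hbmax c this) (not_le.mpr hc)
      · exact absurd (p.injective h) (hab.trans hc).ne'
      · exact h
    -- (2) interior values lie strictly between p b and p a
    have h2 : ∀ c : Fin n, a < c → c < b → p b < p c ∧ p c < p a := by
      intro c hac hcb
      constructor
      · by_contra h
        have hlt : p c < p b :=
          lt_of_le_of_ne (not_lt.mp h) (fun e => (ne_of_lt hcb) (p.injective e))
        exact no312 hinv hav hac hcb hlt hpb
      · by_contra h
        have hlt : p a < p c :=
          lt_of_le_of_ne (not_lt.mp h) (fun e => (ne_of_lt hac) (p.injective e))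
        exact no231 hav hac hcb hpb hlt
    -- (3) interior is decreasing
    have h3 : ∀ c d : Fin n, a < c → c < d → d < b → p d < p c := by
      intro c d hac hcd hdb
      by_contra h
      have hlt : p c < p d :=
        lt_of_le_of_ne (not_lt.mp h) (fun e => (ne_of_lt hcd) (p.injective e))
      exact no312 hinv hav hac hcd hlt (h2 d (hac.trans hcd) hdb).2
    obtain ⟨s, ⟨hsinc, hsmax⟩, huniq⟩ := hu
    have heq : ∀ t, IsIncSubseq ⇑p t → s.card ≤ t.card → t = s := by
      intro t ht hc
      exact huniq t ⟨ht, fun u hu' => (hsmax u hu').trans hc⟩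
    by_cases hain : a ∈ s
    · -- replace a by b
      have hbn : b ∉ s := fun hbs => absurd (hsinc a hain b hbs hab) (asymm hpb)
      set t := insert b (s.erase a) with ht'
      have htinc : IsIncSubseq ⇑p t := by
        intro i hi j hj hij
        rcases Finset.mem_insert.mp hi with hib | hi'
        · rcases Finset.mem_insert.mp hj with hjb | hj'
          · rw [hib, hjb] at hij; exact absurd hij (lt_irrefl _)
          · rw [hib] at hij ⊢
            exact hpb.trans (h1 j hij)
        · rcases Finset.mem_insert.mp hj with hjb | hj'
          · obtain ⟨hia, his⟩ := Finset.mem_erase.mp hi'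
            rw [hjb] at hij ⊢
            rcases lt_or_gt_of_ne hia with h | h
            · exact h0 i b h hij
            · exact absurd (hsinc a hain i his h) (asymm (h2 i h hij).2)
          · exact hsinc i (Finset.mem_erase.mp hi').2 j (Finset.mem_erase.mp hj').2 hij
      have hcard : t.card = s.card := by
        rw [ht', Finset.card_insert_of_notMem
          (fun h => hbn (Finset.mem_erase.mp h).2), Finset.card_erase_of_mem hain]
        have := Finset.card_pos.mpr ⟨a, hain⟩
        omega
      have := heq t htinc hcard.ge
      exact hbn (this ▸ Finset.mem_insert_self b _)
    · by_cases hbin : b ∈ s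
      · -- replace b by a
        set t := insert a (s.erase b) with ht'
        have htinc : IsIncSubseq ⇑p t := by
          intro i hi j hj hij
          rcases Finset.mem_insert.mp hi with hia | hi'
          · rcases Finset.mem_insert.mp hj with hja | hj'
            · rw [hia, hja] at hij; exact absurd hij (lt_irrefl _)
            · obtain ⟨hjb, hjs⟩ := Finset.mem_erase.mp hj'
              rw [hia] at hij ⊢
              rcases lt_or_gt_of_ne hjb with h | h
              · exact absurd (hsinc j hjs b hbin h) (asymm (h2 j hij h).1)
              · exact h1 j h
          · rcases Finset.mem_insert.mp hj with hja | hj'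
            · rw [hja] at hij ⊢
              exact h0 i a hij hij
            · exact hsinc i (Finset.mem_erase.mp hi').2 j (Finset.mem_erase.mp hj').2 hij
        have hcard : t.card = s.card := by
          rw [ht', Finset.card_insert_of_notMem
            (fun h => hain (Finset.mem_erase.mp h).2), Finset.card_erase_of_mem hbin]
          have := Finset.card_pos.mpr ⟨b, hbin⟩
          omega
        have := heq t htinc hcard.ge
        exact hain (this ▸ Finset.mem_insert_self a _)
      · by_cases hC : ∃ c ∈ s, a < c ∧ c < b
        · -- replace the unique interior element by a
          obtain ⟨c0, hc0s, hac0, hc0b⟩ := hC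
          set t := insert a (s.erase c0) with ht'
          have htinc : IsIncSubseq ⇑p t := by
            intro i hi j hj hij
            rcases Finset.mem_insert.mp hi with hia | hi'
            · rcases Finset.mem_insert.mp hj with hja | hj'
              · rw [hia, hja] at hij; exact absurd hij (lt_irrefl _)
              · obtain ⟨hjc0, hjs⟩ := Finset.mem_erase.mp hj'
                rw [hia] at hij ⊢
                have hjb : j ≠ b := fun e => hbin (e ▸ hjs)
                rcases lt_or_gt_of_ne hjb with h | h
                · rcases lt_or_gt_of_ne hjc0 with h' | h'
                  · exact absurd (hsinc j hjs c0 hc0s h') (asymm (h3 j c0 hij h' hc0b))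
                  · exact absurd (hsinc c0 hc0s j hjs h') (asymm (h3 c0 j hac0 h' h))
                · exact h1 j h
            · rcases Finset.mem_insert.mp hj with hja | hj'
              · rw [hja] at hij ⊢
                exact h0 i a hij hij
              · exact hsinc i (Finset.mem_erase.mp hi').2 j (Finset.mem_erase.mp hj').2 hij
          have hcard : t.card = s.card := by
            rw [ht', Finset.card_insert_of_notMem
              (fun h => hain (Finset.mem_erase.mp h).2), Finset.card_erase_of_mem hc0s]
            have := Finset.card_pos.mpr ⟨c0, hc0s⟩
            omega
          have := heq t htinc hcard.ge
          exact hain (this ▸ Finset.mem_insert_self a _)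
        · -- insert a, getting a longer increasing subsequence
          push_neg at hC
          set t := insert a s with ht'
          have htinc : IsIncSubseq ⇑p t := by
            intro i hi j hj hij
            rcases Finset.mem_insert.mp hi with hia | hi'
            · rcases Finset.mem_insert.mp hj with hja | hj'
              · rw [hia, hja] at hij; exact absurd hij (lt_irrefl _)
              · rw [hia] at hij ⊢
                have hjb : j ≠ b := fun e => hbin (e ▸ hj')
                have hbj : b < j := lt_of_le_of_ne (hC j hj' hij) (Ne.symm hjb)
                exact h1 j hbj
            · rcases Finset.mem_insert.mp hj with hja | hj'
              · rw [hja] at hij ⊢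
                exact h0 i a hij hij
              · exact hsinc i hi' j hj' hij
          have := hsmax t htinc
          rw [ht', Finset.card_insert_of_notMem hain] at this
          omega

lemma avoids_one {n : ℕ} : Avoids pattern231 (1 : Equiv.Perm (Fin n)) := by
  rintro ⟨f, hf, hiff⟩
  exact absurd ((hiff 0 2).mp (hf (by decide))) (by decide)

lemma hasULIS_one {n : ℕ} : HasULIS ⇑(1 : Equiv.Perm (Fin n)) := by
  refine ⟨Finset.univ, ⟨fun i _ j _ hij => hij, fun t _ => Finset.card_le_univ t⟩, ?_⟩
  rintro t ⟨htinc, htmax⟩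
  apply Finset.eq_univ_of_card
  have h1 := htmax Finset.univ (fun i _ j _ hij => hij)
  have h2 := Finset.card_le_univ t
  rw [Finset.card_univ] at h1
  omega


/-- For every `n ≥ 1`, the only 231-avoiding involution of length `n` with a unique
longest increasing subsequence is the identity permutation; consequently
`i_n(231) = 1`. -/
theorem i231_eq_one (n : ℕ) (hn : 1 ≤ n) :
    (∀ p : Equiv.Perm (Fin n),
      (p⁻¹ = p ∧ Avoids pattern231 p ∧ HasULIS ⇑p) ↔ p = 1) ∧
    iNum pattern231 n = 1 := by
  have hmain : ∀ p : Equiv.Perm (Fin n),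
      (p⁻¹ = p ∧ Avoids pattern231 p ∧ HasULIS ⇑p) ↔ p = 1 := by
    intro p
    constructor
    · rintro ⟨h1, h2, h3⟩
      exact key_lemma p h1 h2 h3
    · rintro rfl
      exact ⟨inv_one, avoids_one, hasULIS_one⟩
  refine ⟨hmain, ?_⟩
  haveI : Unique {p : Equiv.Perm (Fin n) // p⁻¹ = p ∧ Avoids pattern231 p ∧ HasULIS ⇑p} :=
    { default := ⟨1, (hmain 1).mpr rfl⟩
      uniq := fun x => Subtype.ext ((hmain x.1).mp x.2) }
  exact Nat.card_unique
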